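/- (Π₂ selection from a coded model of the jump.) Let R₀(j, X) and R₁(j, X) be Π⁰₂ predicates relative to a set X (i.e., of the form ∀m ∃n φ(j, m, n, X) with φ computable in X). Let X ⊆ ℕ be a set and let W be an effectively coded ω-model of WKL₀ containing X'. Then there exists a function h ≤_T W with values in {0, 1} such that for every j: if R₀(j, X) or R₁(j, X) holds, then h(j) = 0 implies R₀(j, X) and h(j) = 1 implies R₁(j, X). -/

import Mathlib

/-!
Common computability-theoretic notions (relative to an oracle), formalized from scratch:
oracle machine codes, relative computability, Turing reducibility, the Turing jump,
the recursive join, binary trees, and the relation `A ≪ B` ("every infinite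
`A`-computable binary tree has an infinite path computable from `B`").
-/

namespace ArxivLL

/-- Oracle machine codes: `Nat.Partrec.Code` together with an `oracle` instruction. -/
inductive OCode : Type
  | zero : OCode
  | succ : OCode
  | left : OCode
  | right : OCode
  | oracle : OCode
  | pair : OCode → OCode → OCode
  | comp : OCode → OCode → OCode
  | prec : OCode → OCode → OCode
  | rfind' : OCode → OCode

/-- Evaluation of an oracle machine code relative to a (total) oracle `O : ℕ → ℕ`. -/
def evalo (O : ℕ → ℕ) : OCode → ℕ →. ℕ
  | .zero => pure 0
  | .succ => fun n => Part.some (n + 1)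
  | .left => fun n => Part.some n.unpair.1
  | .right => fun n => Part.some n.unpair.2
  | .oracle => fun n => Part.some (O n)
  | .pair cf cg => fun n => Nat.pair <$> evalo O cf n <*> evalo O cg n
  | .comp cf cg => fun n => evalo O cg n >>= evalo O cf
  | .prec cf cg =>
    Nat.unpaired fun a n =>
      n.rec (evalo O cf a) fun y IH => do
        let i ← IH
        evalo O cg (Nat.pair a (Nat.pair y i))
  | .rfind' cf =>
    Nat.unpaired fun a m =>
      (Nat.rfind fun n => (fun x => x = 0) <$> evalo O cf (Nat.pair a (n + m))).map (· + m)

/-- An (injective) numbering of oracle machine codes. -/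
def encodeOCode : OCode → ℕ
  | .zero => 0
  | .succ => 1
  | .left => 2
  | .right => 3
  | .oracle => 4
  | .pair cf cg => 4 * Nat.pair (encodeOCode cf) (encodeOCode cg) + 5
  | .comp cf cg => 4 * Nat.pair (encodeOCode cf) (encodeOCode cg) + 6
  | .prec cf cg => 4 * Nat.pair (encodeOCode cf) (encodeOCode cg) + 7
  | .rfind' cf => 4 * encodeOCode cf + 8

/-- `f : ℕ → ℕ` is (total) computable relative to the oracle `O`. -/
def RecFun (O : ℕ → ℕ) (f : ℕ → ℕ) : Prop :=
  ∃ c : OCode, ∀ n, evalo O c n = Part.some (f n)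

open Classical in
/-- The characteristic function of a set of natural numbers. -/
noncomputable def chi (A : Set ℕ) : ℕ → ℕ := fun n => if n ∈ A then 1 else 0

/-- Turing reducibility `A ≤_T B` for sets of natural numbers. -/
def TuringLE (A B : Set ℕ) : Prop := RecFun (chi B) (chi A)

/-- The recursive join `A ⊕ B = {2n : n ∈ A} ∪ {2n+1 : n ∈ B}`. -/
def join (A B : Set ℕ) : Set ℕ :=
  {n | (n % 2 = 0 ∧ n / 2 ∈ A) ∨ (n % 2 = 1 ∧ n / 2 ∈ B)}

/-- The Turing jump `A' = {⟨e, x⟩ : Φ_e^A(x)↓}`. -/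
def jump (A : Set ℕ) : Set ℕ :=
  {n | ∃ c : OCode, encodeOCode c = n.unpair.1 ∧ (evalo (chi A) c n.unpair.2).Dom}

/-- The iterated Turing jump `A^(n)`. -/
def jumpIter : ℕ → Set ℕ → Set ℕ
  | 0, A => A
  | n + 1, A => jump (jumpIter n A)

/-- A subtree of `2^{<ω}`: a set of finite binary strings closed under initial segments. -/
def IsBinTree (T : Set (List Bool)) : Prop :=
  ∀ s ∈ T, ∀ t : List Bool, t <+: s → t ∈ T

/-- The set of natural numbers coding the strings belonging to `T`. -/
def setOfStrings (T : Set (List Bool)) : Set ℕ :=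
  {n | ∃ s ∈ T, Encodable.encode s = n}

/-- `f : ℕ → Bool` is an infinite path through the tree `T`. -/
def IsPathOf (f : ℕ → Bool) (T : Set (List Bool)) : Prop :=
  ∀ n, (List.ofFn fun i : Fin n => f i) ∈ T

/-- The subset of `ℕ` determined by a `0`-`1` valued function. -/
def toSet (f : ℕ → Bool) : Set ℕ := {n | f n = true}

/-- `A ≪ B`: every infinite `A`-computable binary tree has an infinite path computable
from `B` (equivalently, `B` has PA degree relative to `A`). -/
def ll (A B : Set ℕ) : Prop :=
  ∀ T : Set (List Bool), IsBinTree T → T.Infinite → TuringLE (setOfStrings T) A →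
    ∃ f : ℕ → Bool, IsPathOf f T ∧ TuringLE (toSet f) B

open Classical in
/-- The length-`n` initial segment of (the characteristic function of) `Y`. -/
noncomputable def initSeg (Y : Set ℕ) (n : ℕ) : List Bool :=
  List.ofFn fun i : Fin n => decide ((i : ℕ) ∈ Y)

/-- `Y` is a member of the `c`-th `Π⁰₁` class relative to `X`: no initial segment of `Y`
is ever rejected (output `1`) by the oracle machine `c` with oracle `X`. -/
def PiClassMem (X : Set ℕ) (c : OCode) (Y : Set ℕ) : Prop :=
  ∀ n, ¬ (1 ∈ evalo (chi X) c (Encodable.encode (initSeg Y n)))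

/-- The `i`-th set coded by (the set part of) `W`. -/
def modelCol (W : Set ℕ) (i : ℕ) : Set ℕ := {n | Nat.pair 0 (Nat.pair i n) ∈ W}

/-- `W ⊆ ℕ` codes an effectively coded `ω`-model `(⟨W_i⟩, f_W, g_W)` of `WKL₀`
containing `A`: the sets `W_i` are the columns `modelCol W i`, and the graphs of
`f_W` and `g_W` are coded on the tags `1` and `2` of `W`; moreover (1) `W_0 = A`,
(2) `W_{f_W(i,j)} = W_i ⊕ W_j`, and (3) whenever the `c`-th `Π⁰₁` class relative to
`W_i` is nonempty, `W_{g_W(⌜c⌝, i)}` is a member of it. -/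
def EffCodedWKL (W A : Set ℕ) : Prop :=
  ∃ f g : ℕ → ℕ → ℕ,
    (∀ i j y, f i j = y ↔ Nat.pair 1 (Nat.pair (Nat.pair i j) y) ∈ W) ∧
    (∀ e i y, g e i = y ↔ Nat.pair 2 (Nat.pair (Nat.pair e i) y) ∈ W) ∧
    modelCol W 0 = A ∧
    (∀ i j, modelCol W (f i j) = join (modelCol W i) (modelCol W j)) ∧
    (∀ (c : OCode) (i : ℕ),
      (∃ Y : Set ℕ, PiClassMem (modelCol W i) c Y) →
      PiClassMem (modelCol W i) c (modelCol W (g (encodeOCode c) i)))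


-- === auxiliary development ===

def codeo : Nat.Partrec.Code → OCode
  | .zero => .zero
  | .succ => .succ
  | .left => .left
  | .right => .right
  | .pair a b => .pair (codeo a) (codeo b)
  | .comp a b => .comp (codeo a) (codeo b)
  | .prec a b => .prec (codeo a) (codeo b)
  | .rfind' a => .rfind' (codeo a)

theorem evalo_codeo (O : ℕ → ℕ) (c : Nat.Partrec.Code) :
    evalo O (codeo c) = c.eval := by
  induction c <;> funext n <;>
    simp [codeo, evalo, Nat.Partrec.Code.eval, PFun.coe_val, *]

theorem RecFun.of_eq {O f g} (h : RecFun O f) (hfg : ∀ n, f n = g n) : RecFun O g := by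
  obtain ⟨c, hc⟩ := h
  exact ⟨c, fun n => by rw [hc, hfg]⟩

theorem RecFun.of_computable {O : ℕ → ℕ} {f : ℕ → ℕ} (hf : Computable f) : RecFun O f := by
  have : Nat.Partrec (fun n => Part.some (f n)) := Partrec.nat_iff.1 hf
  obtain ⟨c, hc⟩ := Nat.Partrec.Code.exists_code.1 this
  exact ⟨codeo c, fun n => by rw [evalo_codeo, hc]⟩

theorem RecFun.oracle (O : ℕ → ℕ) : RecFun O O := ⟨.oracle, fun _ => rfl⟩

theorem RecFun.comp {O f g} (hf : RecFun O f) (hg : RecFun O g) :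
    RecFun O (fun n => f (g n)) := by
  obtain ⟨cf, hcf⟩ := hf; obtain ⟨cg, hcg⟩ := hg
  exact ⟨.comp cf cg, fun n => by
    show (evalo O cg n).bind (evalo O cf) = _
    rw [hcg]
    exact (Part.bind_some (g n) (evalo O cf)).trans (hcf (g n))⟩

theorem RecFun.pair {O f g} (hf : RecFun O f) (hg : RecFun O g) :
    RecFun O (fun n => Nat.pair (f n) (g n)) := by
  obtain ⟨cf, hcf⟩ := hf; obtain ⟨cg, hcg⟩ := hg
  exact ⟨.pair cf cg, fun n => by simp [evalo, hcg, hcf, Seq.seq]⟩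

theorem RecFun.prec {O F G} (hF : RecFun O F) (hG : RecFun O G) :
    RecFun O (fun n => Nat.rec (motive := fun _ => ℕ) (F n.unpair.1)
      (fun y IH => G (Nat.pair n.unpair.1 (Nat.pair y IH))) n.unpair.2) := by
  obtain ⟨cF, hcF⟩ := hF; obtain ⟨cG, hcG⟩ := hG
  refine ⟨.prec cF cG, fun n => ?_⟩
  simp only [evalo, Nat.unpaired]
  induction n.unpair.2 with
  | zero => simp [hcF]
  | succ k ih => simp only [ih]; simp [hcG]

theorem RecFun.mul {O f g} (hf : RecFun O f) (hg : RecFun O g) :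
    RecFun O (fun n => f n * g n) :=
  (RecFun.comp (RecFun.of_computable
      ((Primrec.nat_mul.comp (Primrec.fst.comp Primrec.unpair)
        (Primrec.snd.comp Primrec.unpair)).to_comp)) (hf.pair hg)).of_eq
    (fun n => by simp)

theorem RecFun.add {O f g} (hf : RecFun O f) (hg : RecFun O g) :
    RecFun O (fun n => f n + g n) :=
  (RecFun.comp (RecFun.of_computable
      ((Primrec.nat_add.comp (Primrec.fst.comp Primrec.unpair)
        (Primrec.snd.comp Primrec.unpair)).to_comp)) (hf.pair hg)).of_eq
    (fun n => by simp)

theorem encodeOCode_injective : Function.Injective encodeOCode := by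
  intro c
  induction c with
  | zero => intro d h; cases d <;> simp [encodeOCode] at h <;> first | rfl | omega
  | succ => intro d h; cases d <;> simp [encodeOCode] at h <;> first | rfl | omega
  | left => intro d h; cases d <;> simp [encodeOCode] at h <;> first | rfl | omega
  | right => intro d h; cases d <;> simp [encodeOCode] at h <;> first | rfl | omega
  | oracle => intro d h; cases d <;> simp [encodeOCode] at h <;> first | rfl | omega
  | pair a b iha ihb =>
      intro d h
      cases d <;> simp [encodeOCode, Nat.pair_eq_pair] at h
      all_goals first
        | omega
        | rw [iha h.1, ihb h.2]
  | comp a b iha ihb =>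
      intro d h
      cases d <;> simp [encodeOCode, Nat.pair_eq_pair] at h
      all_goals first
        | omega
        | rw [iha h.1, ihb h.2]
  | prec a b iha ihb =>
      intro d h
      cases d <;> simp [encodeOCode, Nat.pair_eq_pair] at h
      all_goals first
        | omega
        | rw [iha h.1, ihb h.2]
  | rfind' a iha =>
      intro d h
      cases d <;> simp [encodeOCode, Nat.pair_eq_pair] at h
      all_goals first
        | omega
        | rw [iha h]


theorem exists_halt_code {O : ℕ → ℕ} {p : ℕ → ℕ} (hp : RecFun O p) :
    ∃ d : OCode, ∀ j m : ℕ,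
      (evalo O d (Nat.pair j m)).Dom ↔ ∃ n, p (Nat.pair j (Nat.pair m n)) = 1 := by
  have hq : Computable (fun z : ℕ =>
      Nat.pair z.unpair.1.unpair.1 (Nat.pair z.unpair.1.unpair.2 z.unpair.2)) := by
    apply Primrec.to_comp
    exact Primrec₂.natPair.comp
      (Primrec.fst.comp (Primrec.unpair.comp (Primrec.fst.comp Primrec.unpair)))
      (Primrec₂.natPair.comp
        (Primrec.snd.comp (Primrec.unpair.comp (Primrec.fst.comp Primrec.unpair)))
        (Primrec.snd.comp Primrec.unpair))
  have htz : Computable (fun y : ℕ => if y = 1 then 0 else 1) := by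
    apply Primrec.to_comp
    exact Primrec.ite (Primrec.eq.comp Primrec.id (Primrec.const 1))
      (Primrec.const 0) (Primrec.const 1)
  have hf : RecFun O (fun z : ℕ =>
      if p (Nat.pair z.unpair.1.unpair.1 (Nat.pair z.unpair.1.unpair.2 z.unpair.2)) = 1
      then 0 else 1) :=
    ((RecFun.of_computable htz).comp (hp.comp (RecFun.of_computable hq)))
  obtain ⟨cf, hcf⟩ := hf
  have hpz : RecFun O (fun n : ℕ => Nat.pair n 0) :=
    RecFun.of_computable (Primrec.to_comp (Primrec₂.natPair.comp Primrec.id (Primrec.const 0)))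
  obtain ⟨cpz, hcpz⟩ := hpz
  refine ⟨.comp (.rfind' cf) cpz, fun j m => ?_⟩
  have h1 : evalo O (.comp (.rfind' cf) cpz) (Nat.pair j m)
      = evalo O (.rfind' cf) (Nat.pair (Nat.pair j m) 0) := by
    simp [evalo, hcpz]
  rw [h1]
  simp only [evalo, Nat.unpaired, Nat.unpair_pair]
  rw [Part.map_Dom]
  refine Nat.rfind_dom.trans ?_
  constructor
  · rintro ⟨n, htrue, -⟩
    rw [hcf] at htrue
    simp at htrue
    exact ⟨n, htrue⟩
  · rintro ⟨n, hn⟩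
    refine ⟨n, ?_, ?_⟩
    · rw [hcf]
      simp [hn]
    · intro k _
      rw [hcf]
      simp

theorem mem_jump_iff {X : Set ℕ} (d : OCode) (x : ℕ) :
    Nat.pair (encodeOCode d) x ∈ jump X ↔ (evalo (chi X) d x).Dom := by
  constructor
  · rintro ⟨c, hc, hdom⟩
    simp only [Nat.unpair_pair] at hc hdom
    rwa [encodeOCode_injective hc] at hdom
  · intro h
    exact ⟨d, by simp, by simpa using h⟩

-- === the tree-checking function ===

def qy (D j m : ℕ) : ℕ := Nat.pair D (Nat.pair j m)

def dLB (x : ℕ) : List Bool := (Encodable.decode (α := List Bool) x).getD []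

def lenf (x : ℕ) : ℕ := (dLB x).length

def bitT (x j : ℕ) : Bool := (dLB x).getD j true

def allA (O : ℕ → ℕ) (D : ℕ) (j k : ℕ) : ℕ :=
  Nat.rec 1 (fun y IH => IH * (if O (qy D j y) = 1 then 1 else 0)) k

def Pf (O : ℕ → ℕ) (D₀ D₁ : ℕ) (x j m : ℕ) : ℕ :=
  (cond (bitT x j) 0 1) * ((if O (qy D₀ j m) = 0 then 1 else 0) * allA O D₁ j (m + 1))
    + (cond (bitT x j) 1 0) * ((if O (qy D₁ j m) = 0 then 1 else 0) * allA O D₀ j (m + 1))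

def Ef (O : ℕ → ℕ) (D₀ D₁ : ℕ) (x j n : ℕ) : ℕ :=
  Nat.rec 0 (fun y IH => IH + Pf O D₀ D₁ x j y) n

def Ejf (O : ℕ → ℕ) (D₀ D₁ : ℕ) (x n : ℕ) : ℕ :=
  Nat.rec 0 (fun y IH => IH + Ef O D₀ D₁ x y (lenf x)) n

def Bf (O : ℕ → ℕ) (D₀ D₁ : ℕ) (x : ℕ) : ℕ :=
  if Ejf O D₀ D₁ x (lenf x) = 0 then 0 else 1

-- basic primrec facts
private theorem pu1 : Primrec fun n : ℕ => n.unpair.1 := Primrec.fst.comp Primrec.unpair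
private theorem pu2 : Primrec fun n : ℕ => n.unpair.2 := Primrec.snd.comp Primrec.unpair

private theorem pdLB : Primrec dLB :=
  (Primrec.option_getD).comp Primrec.decode (Primrec.const [])

private theorem plenf : Primrec lenf := Primrec.list_length.comp pdLB

private theorem pbitT : Primrec₂ bitT :=
  (Primrec.list_getD true).comp (pdLB.comp Primrec.fst) Primrec.snd

private theorem pqy (D : ℕ) : Primrec₂ (qy D) :=
  Primrec₂.natPair.comp (Primrec.const D) (Primrec₂.natPair.comp Primrec.fst Primrec.snd)

private theorem pind (a : ℕ) : Primrec fun y : ℕ => if y = a then 1 else 0 :=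
  Primrec.ite (Primrec.eq.comp Primrec.id (Primrec.const a)) (Primrec.const 1) (Primrec.const 0)

private theorem psgn : Primrec fun y : ℕ => if y = 0 then 0 else 1 :=
  Primrec.ite (Primrec.eq.comp Primrec.id (Primrec.const 0)) (Primrec.const 0) (Primrec.const 1)

-- value lemmas

theorem allA_ne_zero (O : ℕ → ℕ) (D j : ℕ) :
    ∀ k, (allA O D j k ≠ 0 ↔ ∀ m' < k, O (qy D j m') = 1) := by
  intro k
  induction k with
  | zero => simp [allA]
  | succ k ih =>
      show allA O D j k * _ ≠ 0 ↔ _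
      rw [Nat.mul_ne_zero_iff]
      constructor
      · rintro ⟨h1, h2⟩ m' hm'
        rcases Nat.lt_succ_iff_lt_or_eq.1 hm' with h | h
        · exact (ih.1 h1) m' h
        · subst h
          by_contra hne
          simp [hne] at h2
      · intro h
        refine ⟨ih.2 fun m' hm' => h m' (Nat.lt_succ_of_lt hm'), ?_⟩
        simp [h k (Nat.lt_succ_self k)]

theorem Pf_ne_zero (O : ℕ → ℕ) (D₀ D₁ x j m : ℕ) :
    Pf O D₀ D₁ x j m ≠ 0 ↔
      (bitT x j = false ∧ O (qy D₀ j m) = 0 ∧ ∀ m' ≤ m, O (qy D₁ j m') = 1) ∨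
      (bitT x j = true ∧ O (qy D₁ j m) = 0 ∧ ∀ m' ≤ m, O (qy D₀ j m') = 1) := by
  have hle : ∀ (D : ℕ), (allA O D j (m + 1) ≠ 0 ↔ ∀ m' ≤ m, O (qy D j m') = 1) := by
    intro D
    rw [allA_ne_zero]
    constructor
    · intro h m' hm'; exact h m' (Nat.lt_succ_of_le hm')
    · intro h m' hm'; exact h m' (Nat.lt_succ_iff.1 hm')
  cases hb : bitT x j with
  | false =>
      simp only [Pf, hb, cond_false, cond_true, one_mul, zero_mul, add_zero]
      rw [Nat.mul_ne_zero_iff]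
      constructor
      · rintro ⟨h1, h2⟩
        left
        refine ⟨by simp, ?_, (hle D₁).1 h2⟩
        by_contra hne; simp [hne] at h1
      · rintro (⟨-, h2, h3⟩ | ⟨h, -, -⟩)
        · exact ⟨by simp [h2], (hle D₁).2 h3⟩
        · simp at h
  | true =>
      simp only [Pf, hb, cond_false, cond_true, one_mul, zero_mul, zero_add]
      rw [Nat.mul_ne_zero_iff]
      constructor
      · rintro ⟨h1, h2⟩
        right
        refine ⟨by simp, ?_, (hle D₀).1 h2⟩
        by_contra hne; simp [hne] at h1
      · rintro (⟨h, -, -⟩ | ⟨-, h2, h3⟩)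
        · simp at h
        · exact ⟨by simp [h2], (hle D₀).2 h3⟩

theorem Ef_ne_zero (O : ℕ → ℕ) (D₀ D₁ x j : ℕ) :
    ∀ n, (Ef O D₀ D₁ x j n ≠ 0 ↔ ∃ m < n, Pf O D₀ D₁ x j m ≠ 0) := by
  intro n
  induction n with
  | zero => simp [Ef]
  | succ n ih =>
      show Ef O D₀ D₁ x j n + _ ≠ 0 ↔ _
      constructor
      · intro h
        rcases Nat.eq_zero_or_pos (Ef O D₀ D₁ x j n) with h0 | h0
        · exact ⟨n, Nat.lt_succ_self n, by omega⟩
        · obtain ⟨m, hm, hp⟩ := ih.1 (by omega)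
          exact ⟨m, Nat.lt_succ_of_lt hm, hp⟩
      · rintro ⟨m, hm, hp⟩
        rcases Nat.lt_succ_iff_lt_or_eq.1 hm with h | h
        · have := ih.2 ⟨m, h, hp⟩; omega
        · subst h; omega

theorem Ejf_ne_zero (O : ℕ → ℕ) (D₀ D₁ x : ℕ) :
    ∀ n, (Ejf O D₀ D₁ x n ≠ 0 ↔ ∃ j < n, Ef O D₀ D₁ x j (lenf x) ≠ 0) := by
  intro n
  induction n with
  | zero => simp [Ejf]
  | succ n ih =>
      show Ejf O D₀ D₁ x n + _ ≠ 0 ↔ _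
      constructor
      · intro h
        rcases Nat.eq_zero_or_pos (Ejf O D₀ D₁ x n) with h0 | h0
        · exact ⟨n, Nat.lt_succ_self n, by omega⟩
        · obtain ⟨j, hj, hp⟩ := ih.1 (by omega)
          exact ⟨j, Nat.lt_succ_of_lt hj, hp⟩
      · rintro ⟨j, hj, hp⟩
        rcases Nat.lt_succ_iff_lt_or_eq.1 hj with h | h
        · have := ih.2 ⟨j, h, hp⟩; omega
        · subst h; omega

theorem Bf_eq_one (O : ℕ → ℕ) (D₀ D₁ x : ℕ) :
    Bf O D₀ D₁ x = 1 ↔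
      ∃ j < lenf x, ∃ m < lenf x, Pf O D₀ D₁ x j m ≠ 0 := by
  unfold Bf
  split
  · next h =>
      simp only [show (0 : ℕ) ≠ 1 from by omega, false_iff]
      rintro ⟨j, hj, m, hm, hp⟩
      exact ((Ejf_ne_zero O D₀ D₁ x (lenf x)).2
        ⟨j, hj, (Ef_ne_zero O D₀ D₁ x j (lenf x)).2 ⟨m, hm, hp⟩⟩) h
  · next h =>
      simp only [true_iff]
      obtain ⟨j, hj, he⟩ := (Ejf_ne_zero O D₀ D₁ x (lenf x)).1 h
      obtain ⟨m, hm, hp⟩ := (Ef_ne_zero O D₀ D₁ x j (lenf x)).1 he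
      exact ⟨j, hj, m, hm, hp⟩

-- RecFun lemmas

private theorem rec_congr {b : ℕ} {f g : ℕ → ℕ → ℕ} (h : ∀ y i, f y i = g y i) :
    ∀ k, Nat.rec (motive := fun _ => ℕ) b f k = Nat.rec (motive := fun _ => ℕ) b g k := by
  intro k
  induction k with
  | zero => rfl
  | succ k ih => show f k _ = g k _; rw [ih, h]

theorem recFun_allA (O : ℕ → ℕ) (D : ℕ) :
    RecFun O (fun w => allA O D w.unpair.1 w.unpair.2) := by
  have hG : RecFun O (fun z : ℕ =>
      z.unpair.2.unpair.2 * (if O (qy D z.unpair.1 z.unpair.2.unpair.1) = 1 then 1 else 0)) := by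
    refine RecFun.mul (RecFun.of_computable ?_) ?_
    · exact (pu2.comp pu2).to_comp
    · refine (RecFun.of_computable (pind 1).to_comp).comp ((RecFun.oracle O).comp
        (RecFun.of_computable ?_))
      exact ((pqy D).comp pu1 (pu1.comp pu2)).to_comp
  have := RecFun.prec (RecFun.of_computable (Computable.const 1)) hG
  refine this.of_eq fun n => ?_
  refine rec_congr (fun y i => ?_) n.unpair.2
  simp

theorem recFun_Pf (O : ℕ → ℕ) (D₀ D₁ : ℕ) :
    RecFun O (fun v => Pf O D₀ D₁ v.unpair.1 v.unpair.2.unpair.1 v.unpair.2.unpair.2) := by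
  have hbit0 : Computable fun v : ℕ => (cond (bitT v.unpair.1 v.unpair.2.unpair.1) 0 1 : ℕ) := by
    apply Primrec.to_comp
    exact Primrec.cond (pbitT.comp pu1 (pu1.comp pu2)) (Primrec.const 0) (Primrec.const 1)
  have hbit1 : Computable fun v : ℕ => (cond (bitT v.unpair.1 v.unpair.2.unpair.1) 1 0 : ℕ) := by
    apply Primrec.to_comp
    exact Primrec.cond (pbitT.comp pu1 (pu1.comp pu2)) (Primrec.const 1) (Primrec.const 0)
  have how : ∀ D : ℕ, RecFun O fun v : ℕ =>
      (if O (qy D v.unpair.2.unpair.1 v.unpair.2.unpair.2) = 0 then 1 else 0 : ℕ) := by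
    intro D
    refine (RecFun.of_computable (pind 0).to_comp).comp ((RecFun.oracle O).comp
      (RecFun.of_computable ?_))
    exact ((pqy D).comp (pu1.comp pu2) (pu2.comp pu2)).to_comp
  have hall : ∀ D : ℕ, RecFun O fun v : ℕ => allA O D v.unpair.2.unpair.1 (v.unpair.2.unpair.2 + 1) := by
    intro D
    have hc : Computable fun v : ℕ => Nat.pair v.unpair.2.unpair.1 (v.unpair.2.unpair.2 + 1) :=
      (Primrec₂.natPair.comp (pu1.comp pu2) (Primrec.succ.comp (pu2.comp pu2))).to_comp
    exact ((recFun_allA O D).comp (RecFun.of_computable hc)).of_eq fun v => by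
      simp [Nat.unpair_pair]
  exact RecFun.add
    (RecFun.mul (RecFun.of_computable hbit0) (RecFun.mul (how D₀) (hall D₁)))
    (RecFun.mul (RecFun.of_computable hbit1) (RecFun.mul (how D₁) (hall D₀)))

theorem recFun_Ef (O : ℕ → ℕ) (D₀ D₁ : ℕ) :
    RecFun O (fun u => Ef O D₀ D₁ u.unpair.1.unpair.1 u.unpair.1.unpair.2 u.unpair.2) := by
  have hG : RecFun O (fun z : ℕ => z.unpair.2.unpair.2 +
      Pf O D₀ D₁ z.unpair.1.unpair.1 z.unpair.1.unpair.2 z.unpair.2.unpair.1) := by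
    refine RecFun.add (RecFun.of_computable (pu2.comp pu2).to_comp) ?_
    have hc : Computable fun z : ℕ =>
        Nat.pair z.unpair.1.unpair.1 (Nat.pair z.unpair.1.unpair.2 z.unpair.2.unpair.1) :=
      (Primrec₂.natPair.comp (pu1.comp pu1)
        (Primrec₂.natPair.comp (pu2.comp pu1) (pu1.comp pu2))).to_comp
    exact ((recFun_Pf O D₀ D₁).comp (RecFun.of_computable hc)).of_eq fun z => by
      simp [Nat.unpair_pair]
  have := RecFun.prec (RecFun.of_computable (Computable.const 0)) hG
  refine this.of_eq fun u => ?_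
  refine rec_congr (fun y i => ?_) u.unpair.2
  simp

theorem recFun_Ejf (O : ℕ → ℕ) (D₀ D₁ : ℕ) :
    RecFun O (fun u => Ejf O D₀ D₁ u.unpair.1 u.unpair.2) := by
  have hG : RecFun O (fun z : ℕ => z.unpair.2.unpair.2 +
      Ef O D₀ D₁ z.unpair.1 z.unpair.2.unpair.1 (lenf z.unpair.1)) := by
    refine RecFun.add (RecFun.of_computable (pu2.comp pu2).to_comp) ?_
    have hc : Computable fun z : ℕ =>
        Nat.pair (Nat.pair z.unpair.1 z.unpair.2.unpair.1) (lenf z.unpair.1) :=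
      (Primrec₂.natPair.comp (Primrec₂.natPair.comp pu1 (pu1.comp pu2))
        (plenf.comp pu1)).to_comp
    exact ((recFun_Ef O D₀ D₁).comp (RecFun.of_computable hc)).of_eq fun z => by
      simp [Nat.unpair_pair]
  have := RecFun.prec (RecFun.of_computable (Computable.const 0)) hG
  refine this.of_eq fun u => ?_
  refine rec_congr (fun y i => ?_) u.unpair.2
  simp

theorem recFun_Bf (O : ℕ → ℕ) (D₀ D₁ : ℕ) : RecFun O (Bf O D₀ D₁) := by
  have h1 : RecFun O (fun x => Ejf O D₀ D₁ x (lenf x)) := by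
    have hc : Computable fun x : ℕ => Nat.pair x (lenf x) :=
      (Primrec₂.natPair.comp Primrec.id plenf).to_comp
    exact ((recFun_Ejf O D₀ D₁).comp (RecFun.of_computable hc)).of_eq fun x => by
      simp [Nat.unpair_pair]
  exact ((RecFun.of_computable psgn.to_comp).comp h1).of_eq fun x => by
    unfold Bf
    by_cases h : Ejf O D₀ D₁ x (lenf x) = 0 <;> simp [h]


/-- **`Π₂` selection from a coded model of the jump** (prop:piselect, standard-model
content). Given `Π⁰₂(X)` predicates `R_b j := ∀ m ∃ n, p_b ⟨j,⟨m,n⟩⟩ = 1` (`b = 0, 1`)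
with `X`-computable matrices `p₀, p₁`, and an effectively coded `ω`-model `W` of `WKL₀`
containing `X'`, there is an `h ≤_T W` with values in `{0,1}` such that whenever
`R₀ j ∨ R₁ j`, `h j = 0` implies `R₀ j` and `h j = 1` implies `R₁ j`. -/
theorem pi2_selection (X : Set ℕ) (p₀ p₁ : ℕ → ℕ)
    (hp₀ : RecFun (chi X) p₀) (hp₁ : RecFun (chi X) p₁)
    (W : Set ℕ) (hW : EffCodedWKL W (jump X)) :
    ∃ h : ℕ → ℕ, RecFun (chi W) h ∧ (∀ j, h j ≤ 1) ∧
      ∀ j,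
        ((∀ m, ∃ n, p₀ (Nat.pair j (Nat.pair m n)) = 1) ∨
          (∀ m, ∃ n, p₁ (Nat.pair j (Nat.pair m n)) = 1)) →
        (h j = 0 → ∀ m, ∃ n, p₀ (Nat.pair j (Nat.pair m n)) = 1) ∧
        (h j = 1 → ∀ m, ∃ n, p₁ (Nat.pair j (Nat.pair m n)) = 1) := by
  classical
  -- halting codes for the two matrices
  obtain ⟨d₀, hd₀⟩ := exists_halt_code hp₀
  obtain ⟨d₁, hd₁⟩ := exists_halt_code hp₁
  set D₀ := encodeOCode d₀ with hD₀
  set D₁ := encodeOCode d₁ with hD₁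
  set O : ℕ → ℕ := chi (jump X) with hOdef
  -- the "no witness" predicates
  set nw₀ : ℕ → ℕ → Prop := fun j m => ∀ n, p₀ (Nat.pair j (Nat.pair m n)) ≠ 1 with hnw₀
  set nw₁ : ℕ → ℕ → Prop := fun j m => ∀ n, p₁ (Nat.pair j (Nat.pair m n)) ≠ 1 with hnw₁
  have hchi01 : ∀ (A : Set ℕ) (q : ℕ), (chi A q = 0 ↔ q ∉ A) ∧ (chi A q = 1 ↔ q ∈ A) := by
    intro A q
    unfold chi
    by_cases h : q ∈ A <;> simp [h]
  have hO₀0 : ∀ j m, O (qy D₀ j m) = 0 ↔ nw₀ j m := by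
    intro j m
    rw [(hchi01 (jump X) (qy D₀ j m)).1]
    rw [show (qy D₀ j m) = Nat.pair (encodeOCode d₀) (Nat.pair j m) from rfl]
    rw [mem_jump_iff d₀ (Nat.pair j m), hd₀ j m]
    push_neg
    rfl
  have hO₁0 : ∀ j m, O (qy D₁ j m) = 0 ↔ nw₁ j m := by
    intro j m
    rw [(hchi01 (jump X) (qy D₁ j m)).1]
    rw [show (qy D₁ j m) = Nat.pair (encodeOCode d₁) (Nat.pair j m) from rfl]
    rw [mem_jump_iff d₁ (Nat.pair j m), hd₁ j m]
    push_neg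
    rfl
  have h01 : ∀ q, O q = 0 ∨ O q = 1 := by
    intro q
    rw [hOdef]
    unfold chi
    split <;> simp
  have hO₀1 : ∀ j m, O (qy D₀ j m) = 1 ↔ ¬ nw₀ j m := by
    intro j m
    rw [← hO₀0 j m]
    rcases h01 (qy D₀ j m) with h | h <;> simp [h]
  have hO₁1 : ∀ j m, O (qy D₁ j m) = 1 ↔ ¬ nw₁ j m := by
    intro j m
    rw [← hO₁0 j m]
    rcases h01 (qy D₁ j m) with h | h <;> simp [h]
  -- the code for the tree-checking function
  obtain ⟨ct, hct⟩ := recFun_Bf O D₀ D₁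
  obtain ⟨fW, gW, hfW, hgW, hW0, hjoin, hsel⟩ := hW
  -- facts about encoded initial segments
  have hlen : ∀ (Y : Set ℕ) (n : ℕ), lenf (Encodable.encode (initSeg Y n)) = n := by
    intro Y n
    simp [lenf, dLB, Encodable.encodek, initSeg]
  have hbit : ∀ (Y : Set ℕ) (n j : ℕ), j < n →
      bitT (Encodable.encode (initSeg Y n)) j = decide (j ∈ Y) := by
    intro Y n j hj
    have h1 : dLB (Encodable.encode (initSeg Y n)) = initSeg Y n := by
      simp [dLB, Encodable.encodek]
    have h2 : j < (initSeg Y n).length := by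
      simpa [initSeg] using hj
    rw [bitT, h1, List.getD_eq_getElem _ _ h2]
    simp [initSeg]
  -- badness of a pair (j, m) for a candidate set Y
  set badJ : Set ℕ → ℕ → ℕ → Prop := fun Y j m =>
    (j ∉ Y ∧ nw₀ j m ∧ ∀ m' ≤ m, ¬ nw₁ j m') ∨
    (j ∈ Y ∧ nw₁ j m ∧ ∀ m' ≤ m, ¬ nw₀ j m') with hbadJ
  have hPfbad : ∀ (Y : Set ℕ) (n j m : ℕ), j < n →
      (Pf O D₀ D₁ (Encodable.encode (initSeg Y n)) j m ≠ 0 ↔ badJ Y j m) := by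
    intro Y n j m hj
    rw [Pf_ne_zero, hbit Y n j hj, hbadJ]
    constructor
    · rintro (⟨hb, h0, h1⟩ | ⟨hb, h0, h1⟩)
      · left
        exact ⟨by simpa using hb, (hO₀0 j m).1 h0, fun m' hm' => (hO₁1 j m').1 (h1 m' hm')⟩
      · right
        exact ⟨by simpa using hb, (hO₁0 j m).1 h0, fun m' hm' => (hO₀1 j m').1 (h1 m' hm')⟩
    · rintro (⟨hb, h0, h1⟩ | ⟨hb, h0, h1⟩)
      · left
        exact ⟨by simpa using hb, (hO₀0 j m).2 h0, fun m' hm' => (hO₁1 j m').2 (h1 m' hm')⟩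
      · right
        exact ⟨by simpa using hb, (hO₁0 j m).2 h0, fun m' hm' => (hO₀1 j m').2 (h1 m' hm')⟩
  -- membership in the Π⁰₁ class defined by `ct` is exactly goodness
  have hclass : ∀ Y : Set ℕ, PiClassMem (jump X) ct Y ↔
      ∀ n, ¬ ∃ j < n, ∃ m < n, badJ Y j m := by
    intro Y
    unfold PiClassMem
    constructor
    · intro h n
      have := h n
      rintro ⟨j, hj, m, hm, hbad⟩
      apply this
      rw [hct]
      rw [Part.mem_some_iff, eq_comm, Bf_eq_one]
      exact ⟨j, by rwa [hlen], m, by rwa [hlen], (hPfbad Y n j m hj).2 hbad⟩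
    · intro h n hmem
      rw [hct, Part.mem_some_iff] at hmem
      have h1 := (Bf_eq_one O D₀ D₁ _).1 hmem.symm
      rw [hlen] at h1
      obtain ⟨j, hj, m, hm, hp⟩ := h1
      exact h n ⟨j, hj, m, hm, (hPfbad Y n j m hj).1 hp⟩
  -- the canonical member of the class
  set Y₀ : Set ℕ := {j | ∃ m, nw₀ j m ∧ ∀ m' ≤ m, ¬ nw₁ j m'} with hY₀
  have hY₀good : PiClassMem (jump X) ct Y₀ := by
    rw [hclass]
    intro n
    rintro ⟨j, hj, m, hm, hbad | hbad⟩
    · obtain ⟨hnot, h0, h1⟩ := hbad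
      exact hnot ⟨m, h0, h1⟩
    · obtain ⟨hmem, h1, h0⟩ := hbad
      obtain ⟨k, hk0, hk1⟩ := hmem
      have hmk : k < m := by
        by_contra hle
        exact hk1 m (by omega) h1
      exact h0 k (by omega) hk0
  -- apply the WKL₀ model property at column 0
  have hchiW0 : chi (modelCol W 0) = chi (jump X) := by rw [hW0]
  have hPi0 : ∀ Z : Set ℕ, PiClassMem (modelCol W 0) ct Z ↔ PiClassMem (jump X) ct Z := by
    intro Z
    unfold PiClassMem
    rw [hchiW0]
  have hsel0 := hsel ct 0 ⟨Y₀, (hPi0 Y₀).2 hY₀good⟩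
  set i' : ℕ := gW (encodeOCode ct) 0 with hi'
  set Yst : Set ℕ := modelCol W i' with hYst
  have hYstgood : ∀ n, ¬ ∃ j < n, ∃ m < n, badJ Yst j m := by
    rw [← hclass]
    exact (hPi0 Yst).1 hsel0
  have key : ∀ j m, ¬ badJ Yst j m := by
    intro j m hbad
    exact hYstgood (max j m + 1) ⟨j, by omega, m, by omega, hbad⟩
  -- the selector
  refine ⟨fun j => chi W (Nat.pair 0 (Nat.pair i' j)), ?_, ?_, ?_⟩
  · have hc : Computable fun j : ℕ => Nat.pair 0 (Nat.pair i' j) :=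
      (Primrec₂.natPair.comp (Primrec.const 0)
        (Primrec₂.natPair.comp (Primrec.const i') Primrec.id)).to_comp
    exact (RecFun.oracle (chi W)).comp (RecFun.of_computable hc)
  · intro j
    unfold chi
    dsimp only
    split <;> omega
  · intro j hR
    have hmemYst : ∀ j : ℕ, j ∈ Yst ↔ Nat.pair 0 (Nat.pair i' j) ∈ W := by
      intro j
      rw [hYst]
      rfl
    constructor
    · intro hh
      have hnot : j ∉ Yst := by
        intro hmem
        rw [hmemYst] at hmem
        simp [chi, hmem] at hh
      by_contra hc
      push_neg at hc
      obtain ⟨m, hm⟩ := hc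
      have hnw : nw₀ j m := hm
      have := key j m
      rw [hbadJ] at this
      simp only [not_or] at this
      have h1 := this.1
      push_neg at h1
      obtain ⟨m', hm', hnw1⟩ := h1 hnot hnw
      rcases hR with hR0 | hR1
      · obtain ⟨n, hn⟩ := hR0 m
        exact hnw n hn
      · obtain ⟨n, hn⟩ := hR1 m'
        exact hnw1 n hn
    · intro hh
      have hmem : j ∈ Yst := by
        by_contra hnmem
        rw [hmemYst] at hnmem
        simp [chi, hnmem] at hh
      by_contra hc
      push_neg at hc
      obtain ⟨m, hm⟩ := hc
      have hnw : nw₁ j m := hm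
      have := key j m
      rw [hbadJ] at this
      simp only [not_or] at this
      have h2 := this.2
      push_neg at h2
      obtain ⟨m', hm', hnw0⟩ := h2 hmem hnw
      rcases hR with hR0 | hR1
      · obtain ⟨n, hn⟩ := hR0 m'
        exact hnw0 n hn
      · obtain ⟨n, hn⟩ := hR1 m
        exact hnw n hn


end ArxivLL
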